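/- The empirical drifting field defined by alignment-and-inverse-rotation is SE(3)-equivariant: let Y⋆ be a reference pathway, {X_j}_{j=1}^K a swarm of pathways, R_i ∈ SO(3) alignment rotations with aligned pathways X̃_i = R_i(X_i − X̄_i) + Ȳ⋆, affinities A⁺_i = A_{i,0} and A⁻_{ij} = A_{ij} (j ≥ 1) computed from the jointly normalized logits of aligned pathway distances, aligned-frame drift Ṽ(X̃_i) = A⁺_i Σ_{j=1}^K A⁻_{ij}(Y⋆ − X̃_j), and unaligned drift V(X_i) = R_iᵀ · Ṽ(X̃_i) (rotation acting atom-wise). Suppose that when g = (R,t) ∈ SE(3) acts frame-wise on Y⋆ and on every X_j, the alignment rotations transform as R_i ↦ R R_i Rᵀ. Then the empirical drift computed from the transformed data satisfies V(g·X_i)|_{g·Y⋆, {g·X_j}} = R · V(X_i)|_{Y⋆, {X_j}}. -/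

import Mathlib

/-!
STATEMENT 12: The empirical drifting field defined by
alignment-and-inverse-rotation is SE(3)-equivariant. With reference pathway
`Y⋆`, swarm `{X_j}`, alignment rotations `R_i` and aligned pathways
`X̃_i = R_i(X_i − X̄_i) + Ȳ⋆`, affinities `A⁺_i = A_{i,0}`,
`A⁻_{ij} = A_{ij}` (j ≥ 1) from the jointly normalized logits of aligned
pathway distances, aligned-frame drift
`Ṽ(X̃_i) = A⁺_i Σ_{j=1}^K A⁻_{ij}(Y⋆ − X̃_j)` and unaligned drift
`V(X_i) = R_iᵀ · Ṽ(X̃_i)` (rotation acting atom-wise): if, when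
`g = (R,t) ∈ SE(3)` acts frame-wise on `Y⋆` and every `X_j`, the alignment
rotations transform as `R_i ↦ R R_i Rᵀ`, then
`V(g·X_i)|_{g·Y⋆, {g·X_j}} = R · V(X_i)|_{Y⋆, {X_j}}`.
-/

open Matrix

noncomputable section

/-- 3-dimensional Euclidean space for atom positions. -/
abbrev E3 := EuclideanSpace ℝ (Fin 3)

/-- Pathway space `(ℝ^{3N})^F`. -/
abbrev Pathw (F N : ℕ) := Fin F → Fin N → E3

/-- Pathway distance `d(X,Y) = (1/√(3M)) √(Σ_k Σ_n ‖X_k⁽ⁿ⁾ − Y_k⁽ⁿ⁾‖²)`. -/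
def pdist {F N : ℕ} (X Y : Pathw F N) : ℝ :=
  (Real.sqrt (3 * (F * N : ℕ)))⁻¹ * Real.sqrt (∑ k, ∑ n, ‖X k n - Y k n‖ ^ 2)

/-- Frame-wise SE(3) action on pathways: `(g·X)_k⁽ⁿ⁾ = R X_k⁽ⁿ⁾ + t`. -/
def pact {F N : ℕ} (R : Matrix (Fin 3) (Fin 3) ℝ) (t : E3) (X : Pathw F N) :
    Pathw F N :=
  fun k n => Matrix.toEuclideanLin R (X k n) + t

/-- Atom-wise rotation (no translation) acting on pathway displacements. -/
def protOnly {F N : ℕ} (R₀ : Matrix (Fin 3) (Fin 3) ℝ) (P : Pathw F N) :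
    Pathw F N :=
  fun k n => Matrix.toEuclideanLin R₀ (P k n)

/-- Centroid of a pathway over all `M = F·N` atoms. -/
def pcent {F N : ℕ} (P : Pathw F N) : E3 :=
  (((F * N : ℕ) : ℝ))⁻¹ • ∑ k, ∑ n, P k n

/-- Kabsch alignment of a pathway: `X̃ = R₀(X − X̄) + c` (centroid broadcast). -/
def palign {F N : ℕ} (R₀ : Matrix (Fin 3) (Fin 3) ℝ) (c : E3) (P : Pathw F N) :
    Pathw F N :=
  fun k n => Matrix.toEuclideanLin R₀ (P k n - pcent P) + c

/-- The aligned swarm: `X̃_i = R_i(X_i − X̄_i) + Ȳ⋆`. -/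
def alignedSwarm {F N K : ℕ} (Ri : Fin K → Matrix (Fin 3) (Fin 3) ℝ)
    (Ystar : Pathw F N) (X : Fin K → Pathw F N) : Fin K → Pathw F N :=
  fun i => palign (Ri i) (pcent Ystar) (X i)

/-- Augmented target set `T = (Y⋆, X̃_1, …, X̃_K)`. -/
def targets {F N K : ℕ} (Ystar : Pathw F N) (Xt : Fin K → Pathw F N) :
    Fin (K + 1) → Pathw F N :=
  Fin.cons Ystar Xt

/-- Pairwise logits `L_{ij} = −d(X̃_i, T_j)/τ`. -/
def logits {F N K : ℕ} (τ : ℝ) (Ri : Fin K → Matrix (Fin 3) (Fin 3) ℝ)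
    (Ystar : Pathw F N) (X : Fin K → Pathw F N) :
    Fin K → Fin (K + 1) → ℝ :=
  fun i j =>
    -(pdist (alignedSwarm Ri Ystar X i) (targets Ystar (alignedSwarm Ri Ystar X) j)) / τ

/-- Row softmax `σ_row(L)_{ij} = exp(L_{ij})/Σ_{j'} exp(L_{ij'})`. -/
def rowSoftmax {K : ℕ} (L : Fin K → Fin (K + 1) → ℝ) (i : Fin K)
    (j : Fin (K + 1)) : ℝ :=
  Real.exp (L i j) / ∑ j', Real.exp (L i j')

/-- Column softmax `σ_col(L)_{ij} = exp(L_{ij})/Σ_{i'} exp(L_{i'j})`. -/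
def colSoftmax {K : ℕ} (L : Fin K → Fin (K + 1) → ℝ) (i : Fin K)
    (j : Fin (K + 1)) : ℝ :=
  Real.exp (L i j) / ∑ i', Real.exp (L i' j)

/-- Geometric-mean joint affinities `A_{ij} = √(σ_row(L)_{ij} σ_col(L)_{ij})`. -/
def affinity {F N K : ℕ} (τ : ℝ) (Ri : Fin K → Matrix (Fin 3) (Fin 3) ℝ)
    (Ystar : Pathw F N) (X : Fin K → Pathw F N) :
    Fin K → Fin (K + 1) → ℝ :=
  fun i j =>
    Real.sqrt (rowSoftmax (logits τ Ri Ystar X) i j * colSoftmax (logits τ Ri Ystar X) i j)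

/-- Aligned-frame empirical drift `Ṽ(X̃_i) = A⁺_i Σ_{j=1}^K A⁻_{ij}(Y⋆ − X̃_j)`,
with `A⁺_i = A_{i,0}` and `A⁻_{ij} = A_{i,j}` for `j ≥ 1`. -/
def driftAligned {F N K : ℕ} (τ : ℝ) (Ri : Fin K → Matrix (Fin 3) (Fin 3) ℝ)
    (Ystar : Pathw F N) (X : Fin K → Pathw F N) : Fin K → Pathw F N :=
  fun i =>
    affinity τ Ri Ystar X i 0 •
      ∑ j : Fin K, affinity τ Ri Ystar X i j.succ •
        (Ystar - alignedSwarm Ri Ystar X j)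

/-- Unaligned empirical drift `V(X_i) = R_iᵀ · Ṽ(X̃_i)` (rotation atom-wise). -/
def driftEmp {F N K : ℕ} (τ : ℝ) (Ri : Fin K → Matrix (Fin 3) (Fin 3) ℝ)
    (Ystar : Pathw F N) (X : Fin K → Pathw F N) : Fin K → Pathw F N :=
  fun i => protOnly (Ri i)ᵀ (driftAligned τ Ri Ystar X i)


lemma tel_mul (A B : Matrix (Fin 3) (Fin 3) ℝ) (v : E3) :
    Matrix.toEuclideanLin (A * B) v = Matrix.toEuclideanLin A (Matrix.toEuclideanLin B v) := by
  simp [Matrix.toEuclideanLin_apply, Matrix.mulVec_mulVec]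

lemma tel_norm {R : Matrix (Fin 3) (Fin 3) ℝ} (hR : R ∈ Matrix.orthogonalGroup (Fin 3) ℝ)
    (v : E3) : ‖Matrix.toEuclideanLin R v‖ = ‖v‖ := by
  have h1 : star R * R = 1 := (Matrix.mem_orthogonalGroup_iff' (Fin 3) ℝ).mp hR
  have key : inner ℝ (Matrix.toEuclideanLin R v) (Matrix.toEuclideanLin R v) = (inner ℝ v v : ℝ) := by
    rw [← LinearMap.adjoint_inner_right, ← Matrix.toEuclideanLin_conjTranspose_eq_adjoint,
      ← tel_mul]
    have h2 : Rᴴ = star R := rfl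
    rw [h2, h1]
    simp [Matrix.toEuclideanLin_apply]
  have h2 := real_inner_self_eq_norm_sq (Matrix.toEuclideanLin R v)
  have h3 := real_inner_self_eq_norm_sq v
  nlinarith [norm_nonneg (Matrix.toEuclideanLin R v), norm_nonneg v]

lemma ortho_tRt {R : Matrix (Fin 3) (Fin 3) ℝ} (hR : R ∈ Matrix.orthogonalGroup (Fin 3) ℝ) :
    Rᵀ * R = 1 := by
  have := (Matrix.mem_orthogonalGroup_iff' (Fin 3) ℝ).mp hR
  simpa [Matrix.star_eq_conjTranspose] using this

lemma pcent_pact {F N : ℕ} (hFN : (F * N : ℕ) ≠ 0) (R : Matrix (Fin 3) (Fin 3) ℝ)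
    (t : E3) (P : Pathw F N) :
    pcent (pact R t P) = Matrix.toEuclideanLin R (pcent P) + t := by
  unfold pcent pact
  have h1 : ∑ k : Fin F, ∑ n : Fin N, (Matrix.toEuclideanLin R (P k n) + t)
      = Matrix.toEuclideanLin R (∑ k, ∑ n, P k n) + (F * N : ℕ) • t := by
    simp [Finset.sum_add_distrib, ← map_sum, smul_smul]
  rw [h1, smul_add, ← Nat.cast_smul_eq_nsmul ℝ, smul_smul,
    inv_mul_cancel₀ (by exact_mod_cast hFN), one_smul, _root_.map_smul]

lemma alignedSwarm_pact {F N K : ℕ} (hFN : (F * N : ℕ) ≠ 0)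
    {R : Matrix (Fin 3) (Fin 3) ℝ} (hR : R ∈ Matrix.orthogonalGroup (Fin 3) ℝ) (t : E3)
    (Ri : Fin K → Matrix (Fin 3) (Fin 3) ℝ) (Ystar : Pathw F N) (X : Fin K → Pathw F N) :
    alignedSwarm (fun i => R * Ri i * Rᵀ) (pact R t Ystar) (fun j => pact R t (X j))
      = fun i => pact R t (alignedSwarm Ri Ystar X i) := by
  funext i k n
  simp only [alignedSwarm, palign, pact, pcent_pact hFN]
  have h1 : Matrix.toEuclideanLin R (X i k n) + t
        - (Matrix.toEuclideanLin R (pcent (X i)) + t)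
      = Matrix.toEuclideanLin R (X i k n - pcent (X i)) := by
    rw [map_sub]; abel
  rw [h1, ← tel_mul, show R * Ri i * Rᵀ * R = R * Ri i by
      rw [mul_assoc, ortho_tRt hR, mul_one], tel_mul, map_add]
  abel

lemma pdist_pact {F N : ℕ} {R : Matrix (Fin 3) (Fin 3) ℝ}
    (hR : R ∈ Matrix.orthogonalGroup (Fin 3) ℝ) (t : E3) (A B : Pathw F N) :
    pdist (pact R t A) (pact R t B) = pdist A B := by
  unfold pdist pact
  congr 2
  refine Finset.sum_congr rfl fun k _ => Finset.sum_congr rfl fun n _ => ?_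
  rw [show Matrix.toEuclideanLin R (A k n) + t - (Matrix.toEuclideanLin R (B k n) + t)
      = Matrix.toEuclideanLin R (A k n - B k n) by rw [map_sub]; abel,
    tel_norm hR]

lemma logits_pact {F N K : ℕ} (τ : ℝ) (hFN : (F * N : ℕ) ≠ 0)
    {R : Matrix (Fin 3) (Fin 3) ℝ} (hR : R ∈ Matrix.orthogonalGroup (Fin 3) ℝ) (t : E3)
    (Ri : Fin K → Matrix (Fin 3) (Fin 3) ℝ) (Ystar : Pathw F N) (X : Fin K → Pathw F N) :
    logits τ (fun i => R * Ri i * Rᵀ) (pact R t Ystar) (fun j => pact R t (X j))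
      = logits τ Ri Ystar X := by
  funext i j
  unfold logits
  rw [alignedSwarm_pact hFN hR]
  congr 2
  induction j using Fin.cases with
  | zero => simp [targets, pdist_pact hR]
  | succ l => simp [targets, pdist_pact hR]

lemma affinity_pact {F N K : ℕ} (τ : ℝ) (hFN : (F * N : ℕ) ≠ 0)
    {R : Matrix (Fin 3) (Fin 3) ℝ} (hR : R ∈ Matrix.orthogonalGroup (Fin 3) ℝ) (t : E3)
    (Ri : Fin K → Matrix (Fin 3) (Fin 3) ℝ) (Ystar : Pathw F N) (X : Fin K → Pathw F N) :
    affinity τ (fun i => R * Ri i * Rᵀ) (pact R t Ystar) (fun j => pact R t (X j))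
      = affinity τ Ri Ystar X := by
  unfold affinity
  rw [logits_pact τ hFN hR]

/-- SE(3)-equivariance of the empirical drifting field: when `g = (R,t)` acts
frame-wise on the reference and the swarm and the alignment rotations
transform by conjugation `R_i ↦ R R_i Rᵀ`, the empirical drift transforms by
the rotation `R` alone. -/
theorem driftEmp_SE3_equivariant {F N K : ℕ} (τ : ℝ) (hτ : 0 < τ)
    (R : Matrix (Fin 3) (Fin 3) ℝ)
    (hR : R ∈ Matrix.orthogonalGroup (Fin 3) ℝ) (hdet : R.det = 1)
    (t : E3)
    (Ri : Fin K → Matrix (Fin 3) (Fin 3) ℝ)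
    (hRi : ∀ i, Ri i ∈ Matrix.orthogonalGroup (Fin 3) ℝ ∧ (Ri i).det = 1)
    (Ystar : Pathw F N) (X : Fin K → Pathw F N) :
    ∀ i, driftEmp τ (fun i => R * Ri i * Rᵀ) (pact R t Ystar)
        (fun j => pact R t (X j)) i
      = protOnly R (driftEmp τ Ri Ystar X i) := by
  intro i
  rcases Nat.eq_zero_or_pos (F * N) with hFN | hpos
  · rcases Nat.mul_eq_zero.mp hFN with h | h
    · subst h; exact Subsingleton.elim _ _
    · subst h; exact Subsingleton.elim _ _
  have hFN : (F * N : ℕ) ≠ 0 := hpos.ne'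
  funext k n
  simp only [driftEmp, protOnly, driftAligned, affinity_pact τ hFN hR,
    alignedSwarm_pact hFN hR, Pi.smul_apply, Finset.sum_apply, Pi.sub_apply]
  have hsub : ∀ j, pact R t Ystar k n - pact R t (alignedSwarm Ri Ystar X j) k n
      = Matrix.toEuclideanLin R (Ystar k n - alignedSwarm Ri Ystar X j k n) := by
    intro j; simp only [pact, map_sub]; abel
  have hM : (R * Ri i * Rᵀ)ᵀ * R = R * (Ri i)ᵀ := by
    rw [Matrix.transpose_mul, Matrix.transpose_mul, Matrix.transpose_transpose]
    simp [Matrix.mul_assoc, ortho_tRt hR]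
  simp only [hsub, ← _root_.map_smul, ← map_sum]
  rw [← tel_mul, ← tel_mul, hM]


end
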